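/- Let Ω ⊂ ℝⁿ be a measurable set and let p, q : Ω → ℝ be measurable functions with 1 < essinf_Ω p ≤ esssup_Ω p < ∞ and 1/p(x) + 1/q(x) = 1 for a.e. x ∈ Ω. Then for all measurable u, v : Ω → ℝ such that the Luxemburg norms ‖u‖_p and ‖v‖_q are finite, the Hölder-type inequality ∫_Ω |u(x) v(x)| dx ≤ 2 ‖u‖_p ‖v‖_q holds. -/

import Mathlib

open MeasureTheory ENNReal Filter

/-- The Luxemburg norm `‖u‖_p = inf { λ > 0 : ∫_Ω (|u(x)|/λ)^{p(x)} dx ≤ 1 }`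
(with `inf ∅ = +∞`, realized as `sInf ∅ = ⊤` in `ℝ≥0∞`). -/
noncomputable def luxemburgNorm {n : ℕ} (Ω : Set (EuclideanSpace ℝ (Fin n)))
    (p u : EuclideanSpace ℝ (Fin n) → ℝ) : ℝ≥0∞ :=
  sInf {l : ℝ≥0∞ | 0 < l ∧ l ≠ ⊤ ∧
    (∫⁻ x in Ω, (ENNReal.ofReal |u x| / l) ^ (p x)) ≤ 1}

/-- Hölder's inequality for variable exponents: if `1/p(x) + 1/q(x) = 1` a.e. on `Ω` and
`‖u‖_p, ‖v‖_q` are finite, then `∫_Ω |u v| dx ≤ 2 ‖u‖_p ‖v‖_q`. -/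
theorem variable_exponent_holder {n : ℕ}
    (Ω : Set (EuclideanSpace ℝ (Fin n))) (hΩ : MeasurableSet Ω)
    (p q : EuclideanSpace ℝ (Fin n) → ℝ)
    (hp : Measurable p) (hq : Measurable q)
    (hp1 : 1 < essInf p (volume.restrict Ω))
    (hple : essInf p (volume.restrict Ω) ≤ essSup p (volume.restrict Ω))
    (hconj : ∀ᵐ x ∂(volume.restrict Ω), 1 / p x + 1 / q x = 1)
    (u v : EuclideanSpace ℝ (Fin n) → ℝ)
    (hu : Measurable u) (hv : Measurable v)
    (hufin : luxemburgNorm Ω p u ≠ ⊤) (hvfin : luxemburgNorm Ω q v ≠ ⊤) :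
    (∫⁻ x in Ω, ENNReal.ofReal |u x * v x|) ≤
      2 * luxemburgNorm Ω p u * luxemburgNorm Ω q v := by
  set μ := volume.restrict Ω with hμ
  -- a.e. 1 < p x
  have hM : ∀ᵐ x ∂μ, 1 < p x := by
    rw [essInf_eq_sSup] at hp1
    have hne : {a : ℝ | μ {x | p x < a} = 0}.Nonempty := by
      by_contra h
      rw [Set.not_nonempty_iff_eq_empty] at h
      rw [h, Real.sSup_empty] at hp1
      linarith
    obtain ⟨a, ha, h1a⟩ := exists_lt_of_lt_csSup hne hp1
    have : ∀ᵐ x ∂μ, ¬ (p x < a) := (ae_iff).2 (by simpa using ha)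
    filter_upwards [this] with x hx
    push_neg at hx
    linarith
  have hpq : ∀ᵐ x ∂μ, (p x).HolderConjugate (q x) := by
    filter_upwards [hM, hconj] with x h1 h2
    exact Real.holderConjugate_iff.mpr ⟨h1, by rw [← one_div, ← one_div]; exact h2⟩
  set S := {l : ℝ≥0∞ | 0 < l ∧ l ≠ ⊤ ∧
    (∫⁻ x in Ω, (ENNReal.ofReal |u x| / l) ^ (p x)) ≤ 1} with hS
  set T := {l : ℝ≥0∞ | 0 < l ∧ l ≠ ⊤ ∧
    (∫⁻ x in Ω, (ENNReal.ofReal |v x| / l) ^ (q x)) ≤ 1} with hT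
  have hSne : S.Nonempty := by
    rw [Set.nonempty_iff_ne_empty]
    intro h
    exact hufin (by simp [luxemburgNorm, ← hS, h])
  have hTne : T.Nonempty := by
    rw [Set.nonempty_iff_ne_empty]
    intro h
    exact hvfin (by simp [luxemburgNorm, ← hT, h])
  -- key estimate for admissible l, m
  have key : ∀ l ∈ S, ∀ m ∈ T,
      (∫⁻ x in Ω, ENNReal.ofReal |u x * v x|) ≤ 2 * (l * m) := by
    intro l hl m hm
    obtain ⟨hl0, hlt, hlint⟩ := hl
    obtain ⟨hm0, hmt, hmint⟩ := hm
    set f := fun x => ENNReal.ofReal |u x| / l with hf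
    set g := fun x => ENNReal.ofReal |v x| / m with hg
    have hfm : Measurable f := (hu.abs.ennreal_ofReal).div_const l
    have hgm : Measurable g := (hv.abs.ennreal_ofReal).div_const m
    have step1 : ∀ x, ENNReal.ofReal |u x * v x| = f x * g x * (l * m) := by
      intro x
      rw [abs_mul, ENNReal.ofReal_mul (abs_nonneg _)]
      have h1 : f x * l = ENNReal.ofReal |u x| :=
        ENNReal.div_mul_cancel hl0.ne' hlt
      have h2 : g x * m = ENNReal.ofReal |v x| :=
        ENNReal.div_mul_cancel hm0.ne' hmt
      rw [← h1, ← h2]; ring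
    have step2 : (∫⁻ x in Ω, f x * g x ∂volume) ≤ 2 := by
      calc (∫⁻ x in Ω, f x * g x ∂volume)
          ≤ ∫⁻ x in Ω, (f x ^ (p x) + g x ^ (q x)) ∂volume := by
            refine lintegral_mono_ae ?_
            filter_upwards [hpq] with x hx
            calc f x * g x ≤ f x ^ (p x) / ENNReal.ofReal (p x)
                + g x ^ (q x) / ENNReal.ofReal (q x) :=
              ENNReal.young_inequality (f x) (g x) hx
            _ ≤ f x ^ (p x) + g x ^ (q x) := by
              gcongr
              · calc f x ^ p x / ENNReal.ofReal (p x)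
                    = f x ^ p x * (ENNReal.ofReal (p x))⁻¹ := by
                      rw [div_eq_mul_inv]
                  _ ≤ f x ^ p x * 1 := by
                      gcongr
                      rw [ENNReal.inv_le_one]
                      exact ENNReal.one_le_ofReal.2 hx.lt.le
                  _ = f x ^ p x := mul_one _
              · calc g x ^ q x / ENNReal.ofReal (q x)
                    = g x ^ q x * (ENNReal.ofReal (q x))⁻¹ := by
                      rw [div_eq_mul_inv]
                  _ ≤ g x ^ q x * 1 := by
                      gcongr
                      rw [ENNReal.inv_le_one]
                      exact ENNReal.one_le_ofReal.2 hx.symm.lt.le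
                  _ = g x ^ q x := mul_one _
        _ = (∫⁻ x in Ω, f x ^ (p x) ∂volume) + (∫⁻ x in Ω, g x ^ (q x) ∂volume) :=
            lintegral_add_left (hfm.pow hp) _
        _ ≤ 1 + 1 := add_le_add hlint hmint
        _ = 2 := by norm_num
    calc (∫⁻ x in Ω, ENNReal.ofReal |u x * v x|)
        = ∫⁻ x in Ω, f x * g x * (l * m) ∂volume := by
          exact lintegral_congr fun x => step1 x
      _ = (∫⁻ x in Ω, f x * g x ∂volume) * (l * m) :=
          lintegral_mul_const' _ _ (ENNReal.mul_ne_top hlt hmt)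
      _ ≤ 2 * (l * m) := mul_le_mul_left step2 _
  -- pass to the infimum
  have hlux_u : luxemburgNorm Ω p u = ⨅ l : S, (l : ℝ≥0∞) := by
    rw [luxemburgNorm, ← hS, sInf_eq_iInf']
  have hlux_v : luxemburgNorm Ω q v = ⨅ m : T, (m : ℝ≥0∞) := by
    rw [luxemburgNorm, ← hT, sInf_eq_iInf']
  rw [hlux_u, hlux_v, mul_assoc]
  have main : (∫⁻ x in Ω, ENNReal.ofReal |u x * v x|) / 2 ≤
      (⨅ l : S, (l : ℝ≥0∞)) * ⨅ m : T, (m : ℝ≥0∞) := by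
    refine ENNReal.le_iInf_mul_iInf ?_ ?_ ?_
    · obtain ⟨l, hl⟩ := hSne; exact ⟨⟨l, hl⟩, hl.2.1⟩
    · obtain ⟨m, hm⟩ := hTne; exact ⟨⟨m, hm⟩, hm.2.1⟩
    · rintro ⟨l, hl⟩ ⟨m, hm⟩
      rw [ENNReal.div_le_iff_le_mul (Or.inl two_ne_zero) (Or.inl ENNReal.ofNat_ne_top)]
      calc (∫⁻ x in Ω, ENNReal.ofReal |u x * v x|) ≤ 2 * (l * m) := key l hl m hm
        _ = l * m * 2 := by ring
  calc (∫⁻ x in Ω, ENNReal.ofReal |u x * v x|)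
      = (∫⁻ x in Ω, ENNReal.ofReal |u x * v x|) / 2 * 2 := by
        rw [ENNReal.div_mul_cancel two_ne_zero ENNReal.ofNat_ne_top]
    _ ≤ ((⨅ l : S, (l : ℝ≥0∞)) * ⨅ m : T, (m : ℝ≥0∞)) * 2 := mul_le_mul_left main _
    _ = 2 * ((⨅ l : S, (l : ℝ≥0∞)) * ⨅ m : T, (m : ℝ≥0∞)) := by ring
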